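/- Consequently, s induces a well-defined injective map s* : H^{0,4}_δ → H^{1,3}_d on cohomology, and the image of s* lies in the kernel Ã³ of the map δ* : H^{1,3}_d → H^{1,4}_d induced by δ. -/

import Mathlib

/-- `s` induces a well-defined injective map `s* : H^{0,4}_δ → H^{1,3}_d`,
whose image lies in the kernel `Ã³` of the map `δ* : H^{1,3}_d → H^{1,4}_d`
induced by `δ`.  Here `H^{0,4}_δ = ker δ₄ / im δ₃`, `H^{1,3}_d = C^{1,3}/im d₃`,
`H^{1,4}_d = C^{1,4}/im d₄`; the hypotheses are the homotopy `d = δs + sδ`,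
commutation `δd = dδ`, `δδ = 0`, injectivity of `d₄`, and the consequence
`d₃ = s ∘ δ₃` of `C^{1,2} = 0` (so that `s(B^{0,4}_δ) = B^{1,3}_d`). -/
theorem sStar_injective_into_kernel
    (C03 C04 C05 C13 C14 : Type)
    [AddCommGroup C03] [AddCommGroup C04] [AddCommGroup C05]
    [AddCommGroup C13] [AddCommGroup C14]
    (δ3 : C03 →+ C04) (δ4 : C04 →+ C05)
    (d3 : C03 →+ C13) (d4 : C04 →+ C14)
    (δ' : C13 →+ C14) (s : C04 →+ C13) (s' : C05 →+ C14)
    (hhom : ∀ f : C04, d4 f = δ' (s f) + s' (δ4 f))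
    (hcomm : ∀ g : C03, δ' (d3 g) = d4 (δ3 g))
    (hδδ : ∀ g : C03, δ4 (δ3 g) = 0)
    (hd4inj : Function.Injective d4)
    (hC12 : ∀ g : C03, d3 g = s (δ3 g)) :
    ∃ (S : (δ4.ker ⧸ (δ3.range.addSubgroupOf δ4.ker)) →+ (C13 ⧸ d3.range))
      (T : (C13 ⧸ d3.range) →+ (C14 ⧸ d4.range)),
      (∀ x : C13, T (QuotientAddGroup.mk x) = QuotientAddGroup.mk (δ' x)) ∧
      (∀ f : δ4.ker, S (QuotientAddGroup.mk f) = QuotientAddGroup.mk (s f.1)) ∧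
      Function.Injective S ∧
      (∀ y, T (S y) = 0) := by
  -- define S
  have hS0 : ∀ g ∈ δ3.range.addSubgroupOf δ4.ker,
      ((QuotientAddGroup.mk' d3.range).comp (s.comp δ4.ker.subtype)) g = 0 := by
    rintro ⟨f, hf⟩ hg
    obtain ⟨x, hx⟩ := hg
    simp only [AddMonoidHom.comp_apply, AddSubgroup.coe_subtype,
      QuotientAddGroup.mk'_apply, QuotientAddGroup.eq_zero_iff]
    refine ⟨x, ?_⟩
    rw [hC12, hx]; rfl
  refine ⟨QuotientAddGroup.lift _ _ hS0,
    QuotientAddGroup.lift d3.range ((QuotientAddGroup.mk' d4.range).comp δ') ?_, ?_, ?_, ?_, ?_⟩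
  · rintro g ⟨x, hx⟩
    show ((QuotientAddGroup.mk' d4.range).comp δ') g = 0
    rw [AddMonoidHom.comp_apply, QuotientAddGroup.mk'_apply,
      QuotientAddGroup.eq_zero_iff]
    refine ⟨δ3 x, ?_⟩
    rw [← hcomm, hx]
  · intro x; rfl
  · intro f; rfl
  · rw [injective_iff_map_eq_zero]
    intro a ha
    obtain ⟨f, rfl⟩ := QuotientAddGroup.mk_surjective a
    change ((s f.1 : C13) : C13 ⧸ d3.range) = 0 at ha
    obtain ⟨g, hg⟩ := (QuotientAddGroup.eq_zero_iff _).mp ha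
    rw [QuotientAddGroup.eq_zero_iff]
    refine ⟨g, ?_⟩
    have hker : δ4 f.1 = 0 := f.2
    have h1 : d4 f.1 = δ' (s f.1) := by rw [hhom f.1, hker, map_zero, add_zero]
    have h2 : d4 (δ3 g) = d4 f.1 := by
      rw [← hcomm, h1]
      exact congrArg δ' hg
    exact hd4inj h2
  · intro y
    obtain ⟨g, rfl⟩ := QuotientAddGroup.mk_surjective y
    show ((QuotientAddGroup.mk' d4.range).comp δ') (s g.1) = 0
    simp only [AddMonoidHom.comp_apply, QuotientAddGroup.mk'_apply,
      QuotientAddGroup.eq_zero_iff]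
    refine ⟨g.1, ?_⟩
    rw [hhom g.1, g.2, map_zero, add_zero]
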